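/- Let γ : ℝ → ℝ² be a C² curve parametrized by arc length, i.e. |γ'(s)| = 1 for all s, and let k(s) := γ₁'(s) γ₂''(s) − γ₂'(s) γ₁''(s) denote its signed curvature. Then for all s' < s: |γ(s) − γ(s')| ≥ ∫_{s'}^{s} [ 1 − (1/2) ( ∫_{s'}^{s₁} k(s₂) ds₂ )² ] ds₁, and consequently 1 − |γ(s) − γ(s')| / |s − s'| ≤ (1/(2|s − s'|)) ∫_{s'}^{s} ( ∫_{s'}^{s₁} k(s₂) ds₂ )² ds₁. -/

import Mathlib

open MeasureTheory Real intervalIntegral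
open scoped RealInnerProductSpace

/-- The plane `ℝ²` with its Euclidean norm. -/
abbrev Plane := EuclideanSpace ℝ (Fin 2)

/-- The signed curvature `k(s) = γ₁'(s)γ₂''(s) − γ₂'(s)γ₁''(s)` of a plane curve. -/
noncomputable def signedCurvature (γ : ℝ → Plane) (s : ℝ) : ℝ :=
  deriv (fun t => γ t 0) s * deriv (deriv (fun t => γ t 1)) s
    - deriv (fun t => γ t 1) s * deriv (deriv (fun t => γ t 0)) s

/-- **Chord-length estimate via curvature.** For a `C²` unit-speed plane curve `γ` with
signed curvature `k`, for all `s' < s`: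
`|γ(s) − γ(s')| ≥ ∫_{s'}^{s} [1 − ½(∫_{s'}^{s₁} k)²] ds₁` and consequently
`1 − |γ(s)−γ(s')|/|s−s'| ≤ (1/(2|s−s'|)) ∫_{s'}^{s} (∫_{s'}^{s₁} k)² ds₁`. -/
theorem chord_length_curvature_estimate
    (γ : ℝ → Plane) (hγ : ContDiff ℝ 2 γ)
    (hunit : ∀ s : ℝ, ‖deriv γ s‖ = 1)
    (s s' : ℝ) (hss' : s' < s) :
    (∫ s₁ in s'..s,
        (1 - (1 / 2) * (∫ s₂ in s'..s₁, signedCurvature γ s₂) ^ 2)) ≤ ‖γ s - γ s'‖ ∧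
    1 - ‖γ s - γ s'‖ / |s - s'|
      ≤ (1 / (2 * |s - s'|))
          * ∫ s₁ in s'..s, (∫ s₂ in s'..s₁, signedCurvature γ s₂) ^ 2 := by
  have hss'le : s' ≤ s := hss'.le
  have hγd : Differentiable ℝ γ := hγ.differentiable (by norm_num)
  set a : ℝ → ℝ := deriv (fun t => γ t 0) with ha_def
  set b : ℝ → ℝ := deriv (fun t => γ t 1) with hb_def
  set k : ℝ → ℝ := signedCurvature γ with hk_def
  have h21 : (2 : WithTop ℕ∞) = 1 + 1 := by norm_num
  have hA : ContDiff ℝ 2 (fun t => γ t 0) :=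
    (EuclideanSpace.proj (0 : Fin 2) : Plane →L[ℝ] ℝ).contDiff.comp hγ
  have hB : ContDiff ℝ 2 (fun t => γ t 1) :=
    (EuclideanSpace.proj (1 : Fin 2) : Plane →L[ℝ] ℝ).contDiff.comp hγ
  have ha : ContDiff ℝ 1 a := by rw [h21, contDiff_succ_iff_deriv] at hA; exact hA.2.2
  have hb : ContDiff ℝ 1 b := by rw [h21, contDiff_succ_iff_deriv] at hB; exact hB.2.2
  have haD : Differentiable ℝ a := ha.differentiable one_ne_zero
  have hbD : Differentiable ℝ b := hb.differentiable one_ne_zero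
  have haC : Continuous a := ha.continuous
  have hbC : Continuous b := hb.continuous
  have hdaC : Continuous (deriv a) := (contDiff_one_iff_deriv.mp ha).2
  have hdbC : Continuous (deriv b) := (contDiff_one_iff_deriv.mp hb).2
  have hproj : ∀ (t : ℝ) (i : Fin 2), HasDerivAt (fun u => γ u i) (deriv γ t i) t :=
    fun t i => ((EuclideanSpace.proj i : Plane →L[ℝ] ℝ).hasFDerivAt.comp_hasDerivAt t
      (hγd t).hasDerivAt)
  -- unit speed in components
  have hab : ∀ t, a t ^ 2 + b t ^ 2 = 1 := by
    intro t
    have h := hunit t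
    rw [EuclideanSpace.norm_eq, Real.sqrt_eq_one, Fin.sum_univ_two] at h
    have h0 : a t = deriv γ t 0 := (hproj t 0).deriv
    have h1 : b t = deriv γ t 1 := (hproj t 1).deriv
    simpa [h0, h1, sq_abs] using h
  -- orthogonality of acceleration
  have hsum : ∀ t, a t * deriv a t + b t * deriv b t = 0 := by
    intro t
    have h1 : HasDerivAt (fun t => a t ^ 2 + b t ^ 2)
        (2 * a t * deriv a t + 2 * b t * deriv b t) t := by
      have := (((haD t).hasDerivAt.pow 2).add ((hbD t).hasDerivAt.pow 2))
      exact this.congr_deriv (by norm_num)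
    have h2 : HasDerivAt (fun t => a t ^ 2 + b t ^ 2) 0 t := by
      have he : (fun t => a t ^ 2 + b t ^ 2) = fun _ => (1 : ℝ) := funext hab
      rw [he]; exact hasDerivAt_const t 1
    have := h1.unique h2
    linarith
  have hkab : ∀ t, k t = a t * deriv b t - b t * deriv a t := fun t => rfl
  have hkC : Continuous k := by
    have : k = fun t => a t * deriv b t - b t * deriv a t := funext hkab
    rw [this]
    exact ((haC.mul hdbC).sub (hbC.mul hdaC))
  have hda : ∀ t, deriv a t = -(k t) * b t := by
    intro t
    rw [hkab t]
    linear_combination a t * hsum t - deriv a t * hab t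
  have hdb : ∀ t, deriv b t = k t * a t := by
    intro t
    rw [hkab t]
    linear_combination b t * hsum t - deriv b t * hab t
  -- the angle function
  set φ : ℝ → ℝ := fun s₁ => ∫ s₂ in s'..s₁, k s₂ with hφ_def
  have hφ : ∀ t, HasDerivAt φ (k t) t := fun t =>
    intervalIntegral.integral_hasDerivAt_right (hkC.intervalIntegrable _ _)
      hkC.stronglyMeasurable.stronglyMeasurableAtFilter hkC.continuousAt
  have hφC : Continuous φ := by
    rw [continuous_iff_continuousAt]; exact fun t => (hφ t).continuousAt
  -- f and g
  set f : ℝ → ℝ := fun t => a t * a s' + b t * b s' with hf_def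
  set g : ℝ → ℝ := fun t => a s' * b t - b s' * a t with hg_def
  have hfd : ∀ t, HasDerivAt f (-(k t) * g t) t := by
    intro t
    have := ((haD t).hasDerivAt.mul_const (a s')).add ((hbD t).hasDerivAt.mul_const (b s'))
    exact this.congr_deriv (by rw [hda t, hdb t]; simp only [hg_def]; ring)
  have hgd : ∀ t, HasDerivAt g (k t * f t) t := by
    intro t
    have := (((hbD t).hasDerivAt.const_mul (a s')).sub ((haD t).hasDerivAt.const_mul (b s')))
    exact this.congr_deriv (by rw [hda t, hdb t]; simp only [hf_def]; ring)
  have hcosd : ∀ t, HasDerivAt (fun u => Real.cos (φ u)) (-Real.sin (φ t) * k t) t :=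
    fun t => (Real.hasDerivAt_cos (φ t)).comp t (hφ t)
  have hsind : ∀ t, HasDerivAt (fun u => Real.sin (φ u)) (Real.cos (φ t) * k t) t :=
    fun t => (Real.hasDerivAt_sin (φ t)).comp t (hφ t)
  set F : ℝ → ℝ := fun t => f t * Real.cos (φ t) + g t * Real.sin (φ t) with hF_def
  set G : ℝ → ℝ := fun t => g t * Real.cos (φ t) - f t * Real.sin (φ t) with hG_def
  have hFd : ∀ t, HasDerivAt F 0 t := by
    intro t
    have := ((hfd t).mul (hcosd t)).add ((hgd t).mul (hsind t))
    exact this.congr_deriv (by ring)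
  have hGd : ∀ t, HasDerivAt G 0 t := by
    intro t
    have := ((hgd t).mul (hcosd t)).sub ((hfd t).mul (hsind t))
    exact this.congr_deriv (by ring)
  have hφs' : φ s' = 0 := intervalIntegral.integral_same
  have hFconst := is_const_of_deriv_eq_zero (f := F)
    (fun t => (hFd t).differentiableAt) (fun t => (hFd t).deriv)
  have hGconst := is_const_of_deriv_eq_zero (f := G)
    (fun t => (hGd t).differentiableAt) (fun t => (hGd t).deriv)
  have hF1 : ∀ t, F t = 1 := by
    intro t
    rw [hFconst t s']
    show f s' * Real.cos (φ s') + g s' * Real.sin (φ s') = 1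
    rw [hφs', Real.cos_zero, Real.sin_zero]
    have := hab s'
    show (a s' * a s' + b s' * b s') * 1 + (a s' * b s' - b s' * a s') * 0 = 1
    nlinarith [hab s']
  have hG0 : ∀ t, G t = 0 := by
    intro t
    rw [hGconst t s']
    show g s' * Real.cos (φ s') - f s' * Real.sin (φ s') = 0
    rw [hφs', Real.cos_zero, Real.sin_zero]
    ring
  have hfcos : ∀ t, f t = Real.cos (φ t) := by
    intro t
    have h1 : f t * Real.cos (φ t) + g t * Real.sin (φ t) = 1 := hF1 t
    have h2 : g t * Real.cos (φ t) - f t * Real.sin (φ t) = 0 := hG0 t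
    linear_combination Real.cos (φ t) * h1 - Real.sin (φ t) * h2
      - f t * Real.sin_sq_add_cos_sq (φ t)
  -- FTC for the chord
  have hchA : γ s 0 - γ s' 0 = ∫ t in s'..s, a t := by
    have := intervalIntegral.integral_deriv_eq_sub
      (f := fun t => γ t 0) (a := s') (b := s)
      (fun x _ => (hA.differentiable (by norm_num)).differentiableAt)
      (haC.intervalIntegrable _ _)
    rw [this]
  have hchB : γ s 1 - γ s' 1 = ∫ t in s'..s, b t := by
    have := intervalIntegral.integral_deriv_eq_sub
      (f := fun t => γ t 1) (a := s') (b := s)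
      (fun x _ => (hB.differentiable (by norm_num)).differentiableAt)
      (hbC.intervalIntegrable _ _)
    rw [this]
  -- the inner product equals ∫ f
  have hinner : ⟪γ s - γ s', deriv γ s'⟫ = ∫ t in s'..s, f t := by
    have h0 : a s' = deriv γ s' 0 := (hproj s' 0).deriv
    have h1 : b s' = deriv γ s' 1 := (hproj s' 1).deriv
    have hint : (∫ t in s'..s, f t)
        = (∫ t in s'..s, a t) * a s' + (∫ t in s'..s, b t) * b s' := by
      rw [← intervalIntegral.integral_mul_const, ← intervalIntegral.integral_mul_const,
        ← intervalIntegral.integral_add (f := fun x => a x * a s') (g := fun x => b x * b s')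
          ((haC.mul continuous_const).intervalIntegrable _ _)
          ((hbC.mul continuous_const).intervalIntegrable _ _)]
    rw [hint, ← hchA, ← hchB]
    simp [PiLp.inner_apply, Fin.sum_univ_two, RCLike.inner_apply, ← h0, ← h1]
    ring
  -- main inequality chain
  have hφ2C : Continuous fun t => 1 - (1 / 2) * φ t ^ 2 :=
    continuous_const.sub (continuous_const.mul (hφC.pow 2))
  have hcosC : Continuous fun t => Real.cos (φ t) := Real.continuous_cos.comp hφC
  have key1 : (∫ t in s'..s, (1 - (1 / 2) * φ t ^ 2)) ≤ ∫ t in s'..s, Real.cos (φ t) := by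
    apply intervalIntegral.integral_mono_on hss'le
      (hφ2C.intervalIntegrable _ _) (hcosC.intervalIntegrable _ _)
    intro x _
    have := Real.one_sub_sq_div_two_le_cos (x := φ x)
    linarith
  have key2 : (∫ t in s'..s, Real.cos (φ t)) = ∫ t in s'..s, f t :=
    intervalIntegral.integral_congr (fun x _ => (hfcos x).symm)
  have key3 : (∫ t in s'..s, f t) ≤ ‖γ s - γ s'‖ := by
    rw [← hinner]
    calc ⟪γ s - γ s', deriv γ s'⟫ ≤ ‖γ s - γ s'‖ * ‖deriv γ s'‖ := real_inner_le_norm _ _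
      _ = ‖γ s - γ s'‖ := by rw [hunit s', mul_one]
  have part1 : (∫ s₁ in s'..s,
      (1 - (1 / 2) * (∫ s₂ in s'..s₁, k s₂) ^ 2)) ≤ ‖γ s - γ s'‖ := by
    calc (∫ t in s'..s, (1 - (1 / 2) * φ t ^ 2)) ≤ _ := key1
      _ = _ := key2
      _ ≤ _ := key3
  refine ⟨part1, ?_⟩
  -- second inequality
  have hL : (0 : ℝ) < s - s' := sub_pos.mpr hss'
  rw [abs_of_pos hL]
  have hsplit : (∫ t in s'..s, (1 - (1 / 2) * φ t ^ 2))
      = (s - s') - (1 / 2) * ∫ t in s'..s, φ t ^ 2 := by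
    rw [intervalIntegral.integral_sub (g := fun t => (1 / 2 : ℝ) * φ t ^ 2) (intervalIntegrable_const)
      ((continuous_const.mul (hφC.pow 2)).intervalIntegrable _ _),
      intervalIntegral.integral_const, intervalIntegral.integral_const_mul]
    simp
  set I : ℝ := ∫ t in s'..s, φ t ^ 2 with hI_def
  have hIeq : I = ∫ s₁ in s'..s, (∫ s₂ in s'..s₁, k s₂) ^ 2 := rfl
  have h2 : (s - s') - (1 / 2) * I ≤ ‖γ s - γ s'‖ := by
    rw [← hsplit]; exact part1
  have hC0 : (0 : ℝ) ≤ ‖γ s - γ s'‖ := norm_nonneg _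
  have h3 : (s - s' - 1 / 2 * I) / (s - s') ≤ ‖γ s - γ s'‖ / (s - s') := by
    gcongr
  have h4 : (s - s' - 1 / 2 * I) / (s - s') = 1 - 1 / (2 * (s - s')) * I := by
    field_simp
  linarith
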